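/- arXiv:1703.00640 — 6 statements merged into one kernel-verified Lean document; each statement's English description precedes it below -/
import Mathlib

section
/- Let W(X) be a polynomial with integer coefficients of degree at most 2N−2, regarded as a polynomial over ℝ, and let L(X) be the remainder on dividing W(X) by A(X) = X^N + 2^{−b} X − 1 (so deg L < N). Then every coefficient of 2^b·L(X) is an integer, L(2^b) is an integer, and L(2^b) ≡ W(2^b) (mod 2^{Nb}). -/
open Polynomial

/-- cancellation trick for the low product.
`A(X) = X^N + 2^(-b) X - 1`, `L` is the remainder of `W` (viewed over `ℝ`) modulo `A`.
Then all coefficients of `2^b * L` are integers, `L(2^b)` is an integer, and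
`L(2^b) ≡ W(2^b) (mod 2^(N*b))`. -/
theorem low_product_cancellation (b N : ℕ) (hb : 4 ≤ b) (hN : 3 ≤ N)
    (W : Polynomial ℤ) (hW : W.natDegree ≤ 2 * N - 2)
    (L : Polynomial ℝ)
    (hL : L = (W.map (Int.castRingHom ℝ)) %ₘ (X ^ N + C ((2:ℝ) ^ (-(b:ℤ))) * X - 1)) :
    (∀ i : ℕ, ∃ m : ℤ, (2:ℝ) ^ b * L.coeff i = (m : ℝ)) ∧
    ∃ m : ℤ, L.eval ((2:ℝ) ^ b) = (m : ℝ) ∧ m ≡ W.eval (2 ^ b) [ZMOD (2:ℤ) ^ (N * b)] := by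
  set c : ℝ := (2:ℝ) ^ (-(b:ℤ)) with hc
  set f := Int.castRingHom ℝ
  set Wl : Polynomial ℤ := ∑ j ∈ Finset.range N, C (W.coeff j) * X ^ j with hWl
  set Qz : Polynomial ℤ := ∑ j ∈ Finset.range (N - 1), C (W.coeff (N + j)) * X ^ j with hQz
  have hcoeffWl : ∀ i, Wl.coeff i = if i < N then W.coeff i else 0 := by
    intro i
    simp [hWl, finset_sum_coeff, coeff_C_mul, coeff_X_pow, Finset.sum_ite_eq, Finset.mem_range]
  have hcoeffQz : ∀ i, Qz.coeff i = if i < N - 1 then W.coeff (N + i) else 0 := by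
    intro i
    simp [hQz, finset_sum_coeff, coeff_C_mul, coeff_X_pow, Finset.sum_ite_eq, Finset.mem_range]
  have hdecomp : W = Wl + Qz * X ^ N := by
    ext i
    rw [coeff_add, coeff_mul_X_pow', hcoeffWl]
    rcases lt_or_ge i N with h | h
    · simp [h, not_le.mpr h]
    · rw [if_neg (not_lt.mpr h), if_pos h, hcoeffQz]
      rcases lt_or_ge (i - N) (N - 1) with h2 | h2
      · rw [if_pos h2]
        have hni : N + (i - N) = i := by omega
        rw [hni, zero_add]
      · rw [if_neg (not_lt.mpr h2), coeff_eq_zero_of_natDegree_lt (by omega)]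
        simp
  have h2bc : (2:ℝ) ^ b * c = 1 := by
    rw [hc, ← zpow_natCast (2:ℝ) b, ← zpow_add₀ (two_ne_zero)]
    simp
  have hdeglow : degree (C c * X - 1 : Polynomial ℝ) < (N : WithBot ℕ) := by
    have h1 : degree (C c * X - 1 : Polynomial ℝ) ≤ 1 := by
      have : (C c * X - 1 : Polynomial ℝ) = C c * X + C (-1 : ℝ) := by
        simp [sub_eq_add_neg]
      rw [this]
      exact degree_linear_le
    refine lt_of_le_of_lt h1 ?_
    exact_mod_cast Nat.one_lt_cast.mpr (by omega)
  have hsplit : (X ^ N + C c * X - 1 : Polynomial ℝ) = X ^ N + (C c * X - 1) := by ring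
  have hA : (X ^ N + C c * X - 1 : Polynomial ℝ).Monic := by
    rw [hsplit]
    exact monic_X_pow_add hdeglow
  have hdegA : (X ^ N + C c * X - 1 : Polynomial ℝ).degree = N := by
    have h1 : degree (C c * X - 1 : Polynomial ℝ) < degree (X ^ N : Polynomial ℝ) := by
      rw [degree_X_pow]; exact hdeglow
    rw [hsplit, degree_add_eq_left_of_degree_lt h1, degree_X_pow]
  set Lr : Polynomial ℝ := Wl.map f + Qz.map f - C c * (X * Qz.map f) with hLr
  have hLLr : L = Lr := by
    rw [hL]
    refine (div_modByMonic_unique (Qz.map f) Lr hA ⟨?_, ?_⟩).2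
    · have hmap : W.map f = Wl.map f + Qz.map f * X ^ N := by
        rw [hdecomp]
        simp [Polynomial.map_add, Polynomial.map_mul, Polynomial.map_pow]
      rw [hmap, hLr]; ring
    · rw [hdegA]
      rw [degree_lt_iff_coeff_zero]
      intro m hm
      have hm' : N ≤ m := by exact_mod_cast hm
      obtain ⟨k, rfl⟩ : ∃ k, m = k + 1 := ⟨m - 1, by omega⟩
      simp only [hLr, coeff_add, coeff_sub, coeff_C_mul, coeff_map, coeff_X_mul,
        hcoeffWl, hcoeffQz]
      rw [if_neg (by omega), if_neg (by omega), if_neg (by omega)]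
      simp
  constructor
  · intro i
    refine ⟨(C ((2:ℤ) ^ b) * (Wl + Qz) - X * Qz).coeff i, ?_⟩
    have key : (2:ℝ) ^ b * L.coeff i
        = (2:ℝ) ^ b * (((Wl.coeff i + Qz.coeff i : ℤ) : ℝ)) - (((X * Qz).coeff i : ℤ) : ℝ) := by
      rw [hLLr, hLr]
      have hXmul : (X * Qz.map f).coeff i = (((X * Qz).coeff i : ℤ) : ℝ) := by
        have hm : X * Qz.map f = (X * Qz).map f := by simp [Polynomial.map_mul]
        rw [hm, coeff_map]; rfl
      simp only [coeff_add, coeff_sub, coeff_C_mul, coeff_map, hXmul, f, eq_intCast]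
      push_cast
      linear_combination (-(((X * Qz).coeff i : ℤ) : ℝ)) * h2bc
    rw [key]
    simp only [coeff_sub, coeff_C_mul, coeff_add]
    push_cast
    ring
  · refine ⟨Wl.eval (2 ^ b), ?_, ?_⟩
    · have hpt : ((2:ℝ) ^ b) = f ((2:ℤ) ^ b) := by
        simp only [f, eq_intCast]
        push_cast
        ring
      have heval : ∀ p : Polynomial ℤ, (p.map f).eval ((2:ℝ) ^ b) = ((p.eval (2 ^ b) : ℤ) : ℝ) := by
        intro p
        rw [hpt, eval_map, eval₂_at_apply]
        rfl
      rw [hLLr, hLr]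
      simp only [eval_sub, eval_add, eval_mul, eval_C, eval_X, heval]
      rw [← mul_assoc, mul_comm c, h2bc]
      ring
    · have : W.eval (2 ^ b) - Wl.eval (2 ^ b) = (2:ℤ) ^ (N * b) * Qz.eval (2 ^ b) := by
        conv_lhs => rw [hdecomp]
        simp only [eval_add, eval_mul, eval_pow, eval_X]
        rw [← pow_mul, mul_comm b N]
        ring
      exact (Int.modEq_iff_dvd.mpr ⟨Qz.eval (2 ^ b), this⟩)
end

section
/- For every integer k ≥ 0 and every z ∈ ℂ with |z| < 2, the series α(z) := ∑_{r=0}^∞ α_{r,1} z^{r+1} converges and satisfies α(z)^k = ∑_{r=0}^∞ α_{r,k} z^{k+r}, where the series on the right also converges. -/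
/-- Generalized binomial coefficient `C(x, r) = x (x-1) ⋯ (x-r+1) / r!`. -/
noncomputable def gbc (x : ℝ) (r : ℕ) : ℝ :=
  (∏ j ∈ Finset.range r, (x - j)) / (r.factorial : ℝ)

/-- The coefficients `α_{r,k}` of `α(z)^k`: `α_{0,k} = 1` and
`α_{r,k} = (k/(rN)) C((k+r)/N - 1, r-1) (-2^(-b))^r` for `r ≥ 1`. -/
noncomputable def alphaC (b N r k : ℕ) : ℝ :=
  if r = 0 then 1
  else ((k : ℝ) / (r * N)) * gbc (((k : ℝ) + r) / N - 1) (r - 1) * (-(2:ℝ) ^ (-(b:ℤ))) ^ r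



open Finset Polynomial

lemma prod_shift (u : ℝ) (m : ℕ) :
    ∏ j ∈ range (m+1), (u - (j:ℝ)) = u * ∏ j ∈ range m, (u - 1 - (j:ℝ)) := by
  rw [Finset.prod_range_succ']
  simp only [Nat.cast_zero, sub_zero, Nat.cast_add, Nat.cast_one]
  rw [mul_comm]
  congr 1
  exact Finset.prod_congr rfl (fun j _ => by ring)

lemma gbc_absorb (u : ℝ) (m : ℕ) :
    ((m:ℝ)+1) * gbc u (m+1) = u * gbc (u-1) m := by
  have hm : ((m.factorial : ℝ)) ≠ 0 := Nat.cast_ne_zero.mpr m.factorial_ne_zero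
  have h1 : ((m:ℝ)+1) ≠ 0 := by positivity
  rw [gbc, gbc, Nat.factorial_succ, prod_shift]
  push_cast
  field_simp

lemma gbc_pascal (u : ℝ) (m : ℕ) :
    gbc u (m+1) = gbc (u-1) m + gbc (u-1) (m+1) := by
  have h1 : ((m:ℝ)+1) ≠ 0 := by positivity
  have key : ∏ j ∈ range (m+1), (u - (j:ℝ)) - ∏ j ∈ range (m+1), (u - 1 - (j:ℝ))
      = ((m:ℝ)+1) * ∏ j ∈ range m, (u - 1 - (j:ℝ)) := by
    rw [prod_shift, Finset.prod_range_succ]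
    ring
  have : gbc u (m+1) - gbc (u-1) (m+1) = gbc (u-1) m := by
    rw [gbc, gbc, gbc, Nat.factorial_succ, div_sub_div_same, key]
    push_cast
    rw [mul_div_mul_left _ _ h1]
  linarith


noncomputable def Afun (n : ℕ) (x w : ℝ) : ℝ :=
  if n = 0 then 1 else (x / n) * gbc (x + n * w - 1) (n - 1)

noncomputable def Bfun (n : ℕ) (y w : ℝ) : ℝ := gbc (y + n * w) n

lemma Afun_zero (x w : ℝ) : Afun 0 x w = 1 := rfl

lemma Bfun_zero (y w : ℝ) : Bfun 0 y w = 1 := by simp [Bfun, gbc]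

lemma Afun_at_zero (n : ℕ) (w : ℝ) (hn : n ≠ 0) : Afun n 0 w = 0 := by
  simp [Afun, hn]

lemma Bfun_pascal (n : ℕ) (y w : ℝ) :
    Bfun (n+1) y w = Bfun (n+1) (y-1) w + Bfun n (y+w-1) w := by
  rw [Bfun, Bfun, Bfun]
  push_cast
  rw [show y - 1 + ((n:ℝ)+1)*w = (y + ((n:ℝ)+1)*w) - 1 by ring,
      show y + w - 1 + (n:ℝ)*w = (y + ((n:ℝ)+1)*w) - 1 by ring,
      gbc_pascal]
  ring

lemma AfunD2 (n : ℕ) (x w : ℝ) :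
    Afun (n+1) x w = Bfun (n+1) x w - w * Bfun n (x+w-1) w := by
  have h1 : ((n:ℝ)+1) ≠ 0 := by positivity
  have habs := gbc_absorb (x + ((n:ℝ)+1) * w) n
  rw [Afun, Bfun, Bfun]
  simp only [Nat.add_sub_cancel, Nat.succ_ne_zero, if_false]
  push_cast
  rw [show x + w - 1 + (n:ℝ)*w = x + ((n:ℝ)+1)*w - 1 by ring]
  have : gbc (x + ((n:ℝ)+1) * w) (n+1) =
      ((x + ((n:ℝ)+1)*w) / ((n:ℝ)+1)) * gbc (x + ((n:ℝ)+1)*w - 1) n := by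
    field_simp
    linarith [habs]
  rw [this]
  field_simp
  ring
lemma Afun_pascal (n : ℕ) (x w : ℝ) :
    Afun (n+1) x w = Afun (n+1) (x-1) w + Afun n (x+w-1) w := by
  cases n with
  | zero =>
    simp [Afun, gbc]
    try ring
  | succ m =>
    rw [AfunD2, AfunD2, AfunD2]
    rw [Bfun_pascal (m+1) x w, Bfun_pascal m (x+w-1) w]
    rw [show x - 1 + w - 1 = x + w - 1 - 1 by ring]
    ring
noncomputable def gbcP (a : ℝ) (m : ℕ) : Polynomial ℝ :=
  Polynomial.C ((m.factorial : ℝ))⁻¹ * ∏ j ∈ Finset.range m, (Polynomial.X + Polynomial.C (a - j))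

lemma gbcP_eval (a x : ℝ) (m : ℕ) : (gbcP a m).eval x = gbc (x + a) m := by
  rw [gbcP, gbc, Polynomial.eval_mul, Polynomial.eval_C, Polynomial.eval_prod]
  simp only [Polynomial.eval_add, Polynomial.eval_X, Polynomial.eval_C]
  rw [div_eq_inv_mul]
  congr 1
  exact Finset.prod_congr rfl (fun j _ => by ring)

noncomputable def Ap (i : ℕ) (w : ℝ) : Polynomial ℝ :=
  if i = 0 then 1 else Polynomial.C ((i : ℝ))⁻¹ * Polynomial.X * gbcP ((i:ℝ) * w - 1) (i - 1)

lemma Ap_eval (i : ℕ) (x w : ℝ) : (Ap i w).eval x = Afun i x w := by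
  cases i with
  | zero => simp [Ap, Afun]
  | succ m =>
    rw [Ap, Afun]
    simp only [Nat.succ_ne_zero, if_false]
    rw [Polynomial.eval_mul, Polynomial.eval_mul, Polynomial.eval_C, Polynomial.eval_X,
      gbcP_eval]
    rw [show x + (((m:ℕ)+1:ℕ):ℝ) * w - 1 = x + ((((m:ℕ)+1:ℕ)):ℝ) * w - 1 from rfl]
    rw [div_eq_inv_mul]
    congr 2
    push_cast
    ring
lemma R2 : ∀ (n : ℕ) (x y w : ℝ),
    ∑ i ∈ range (n+1), Afun i x w * Bfun (n-i) y w = Bfun n (x+y) w := by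
  intro n
  induction n with
  | zero =>
    intro x y w
    simp [Afun, Bfun, gbc]
  | succ n ih =>
    intro x y w
    set P : Polynomial ℝ :=
      (∑ i ∈ range (n+2), Ap i w * Polynomial.C (Bfun (n+1-i) y w))
        - gbcP (y + ((n:ℝ)+1)*w) (n+1) with hP
    have hev : ∀ t : ℝ, P.eval t =
        (∑ i ∈ range (n+2), Afun i t w * Bfun (n+1-i) y w) - Bfun (n+1) (t+y) w := by
      intro t
      rw [hP, Polynomial.eval_sub, Polynomial.eval_finset_sum, gbcP_eval]
      congr 1
      · exact Finset.sum_congr rfl fun i _ => by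
          rw [Polynomial.eval_mul, Polynomial.eval_C, Ap_eval]
      · rw [Bfun]
        push_cast
        ring_nf
    have hdiff : ∀ t : ℝ, P.eval t = P.eval (t-1) := by
      intro t
      rw [hev, hev]
      have hsum : ∑ i ∈ range (n+2), Afun i t w * Bfun (n+1-i) y w
          - ∑ i ∈ range (n+2), Afun i (t-1) w * Bfun (n+1-i) y w
          = Bfun n ((t+w-1)+y) w := by
        rw [← ih (t+w-1) y w, ← Finset.sum_sub_distrib, Finset.sum_range_succ']
        have h0 : (Afun 0 t w * Bfun (n+1-0) y w - Afun 0 (t-1) w * Bfun (n+1-0) y w) = 0 := by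
          rw [Afun_zero, Afun_zero]; ring
        rw [h0, add_zero]
        refine Finset.sum_congr rfl fun i _ => ?_
        have hpas := Afun_pascal i t w
        have hidx : n + 1 - (i+1) = n - i := by omega
        rw [hidx]
        have heq : Afun (i+1) t w - Afun (i+1) (t-1) w = Afun i (t+w-1) w := by linarith
        rw [← sub_mul, heq]
      have hB : Bfun (n+1) (t+y) w - Bfun (n+1) ((t-1)+y) w = Bfun n ((t+w-1)+y) w := by
        have hbp := Bfun_pascal n (t+y) w
        rw [show (t-1)+y = (t+y)-1 by ring, show (t+w-1)+y = (t+y)+w-1 by ring]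
        linarith
      linarith
    have hnat : ∀ m : ℕ, P.eval (m:ℝ) = 0 := by
      intro m
      induction m with
      | zero =>
        rw [Nat.cast_zero, hev]
        have hs : ∑ i ∈ range (n+2), Afun i 0 w * Bfun (n+1-i) y w
            = Bfun (n+1) y w := by
          rw [Finset.sum_eq_single 0]
          · rw [Afun_zero, Nat.sub_zero, one_mul]
          · intro i _ hi
            rw [Afun_at_zero i w hi, zero_mul]
          · intro h
            exact absurd (Finset.mem_range.mpr (by omega)) h
        rw [hs, zero_add, sub_self]
      | succ m ihm =>
        have h := hdiff ((m:ℝ)+1)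
        rw [show (m:ℝ)+1-1 = (m:ℝ) by ring] at h
        push_cast
        rw [h, ihm]
    have hP0 : P = 0 := by
      refine P.eq_zero_of_infinite_isRoot ?_
      refine Set.infinite_of_injective_forall_mem (f := fun m : ℕ => (m:ℝ))
        Nat.cast_injective (fun m => ?_)
      exact hnat m
    have hx := hev x
    rw [hP0, Polynomial.eval_zero] at hx
    linarith
lemma R1 (n : ℕ) (x y w : ℝ) :
    ∑ i ∈ range (n+1), Afun i x w * Afun (n-i) y w = Afun n (x+y) w := by
  cases n with
  | zero => simp [Afun]
  | succ n =>
    rw [Finset.sum_range_succ]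
    have hstep : ∀ i ∈ range (n+1), Afun i x w * Afun (n+1-i) y w
        = Afun i x w * Bfun (n+1-i) y w - w * (Afun i x w * Bfun (n-i) (y+w-1) w) := by
      intro i hi
      have hi' : i ≤ n := by have := Finset.mem_range.mp hi; omega
      have hidx : n + 1 - i = (n - i) + 1 := by omega
      rw [hidx, AfunD2 (n-i) y w]
      ring
    rw [Finset.sum_congr rfl hstep, Finset.sum_sub_distrib, ← Finset.mul_sum]
    have h2 : ∑ i ∈ range (n+1), Afun i x w * Bfun (n-i) (y+w-1) w
        = Bfun n (x+(y+w-1)) w := R2 n x (y+w-1) w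
    have h1 : ∑ i ∈ range (n+1), Afun i x w * Bfun (n+1-i) y w
        = Bfun (n+1) (x+y) w - Afun (n+1) x w := by
      have := R2 (n+1) x y w
      rw [Finset.sum_range_succ] at this
      have hb0 : Bfun (n+1-(n+1)) y w = 1 := by
        rw [Nat.sub_self, Bfun_zero]
      rw [hb0, mul_one] at this
      linarith
    rw [h1, h2, Nat.sub_self, Afun_zero, mul_one]
    have hd2 := AfunD2 n (x+y) w
    rw [show x+(y+w-1) = (x+y)+w-1 by ring]
    linarith


lemma alphaC_eq (b N r k : ℕ) :
    alphaC b N r k = Afun r ((k:ℝ)/N) (1/N) * (-(2:ℝ) ^ (-(b:ℤ)))^r := by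
  cases r with
  | zero => simp [alphaC, Afun]
  | succ m =>
    simp only [alphaC, Afun, Nat.succ_ne_zero, if_false, Nat.add_sub_cancel]
    have harg : (k:ℝ)/N + ((m:ℝ)+1) * (1/N) - 1 = ((k:ℝ) + ((m:ℝ)+1))/N - 1 := by
      ring
    congr 1
    push_cast
    rw [harg]
    congr 1
    rw [div_div, mul_comm]

lemma alphaC_conv (b N k n : ℕ) :
    ∑ i ∈ range (n+1), alphaC b N i k * alphaC b N (n-i) 1 = alphaC b N n (k+1) := by
  have hc : ∀ i ∈ range (n+1), alphaC b N i k * alphaC b N (n-i) 1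
      = Afun i ((k:ℝ)/N) (1/N) * Afun (n-i) ((1:ℝ)/N) (1/N) * (-(2:ℝ) ^ (-(b:ℤ)))^n := by
    intro i hi
    have hin : i + (n-i) = n := by
      have := Finset.mem_range.mp hi; omega
    rw [alphaC_eq, alphaC_eq, Nat.cast_one, mul_mul_mul_comm, ← pow_add, hin]
  rw [Finset.sum_congr rfl hc, ← Finset.sum_mul, R1, alphaC_eq b N n (k+1)]
  congr 2
  push_cast
  ring

lemma abs_c (b : ℕ) : |(-(2:ℝ) ^ (-(b:ℤ)))| = ((2:ℝ)^b)⁻¹ := by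
  rw [abs_neg, abs_of_pos (by positivity), zpow_neg, zpow_natCast]

lemma alphaC_bound (b N : ℕ) (hN : 1 ≤ N) (k r : ℕ) :
    |alphaC b N r k| ≤ ((k:ℝ)+1) * Real.exp k * (Real.exp 2 * ((2:ℝ)^b)⁻¹)^r := by
  have hek : (1:ℝ) ≤ Real.exp k := Real.one_le_exp (by positivity)
  cases r with
  | zero =>
    simp only [alphaC, if_true, pow_zero, mul_one]
    rw [abs_one]
    nlinarith [Nat.cast_nonneg (α := ℝ) k]
  | succ m =>
    have hN' : (1:ℝ) ≤ (N:ℝ) := by exact_mod_cast hN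
    set r : ℕ := m + 1 with hr
    have hrR : (1:ℝ) ≤ (r:ℝ) := by exact_mod_cast Nat.one_le_iff_ne_zero.mpr (by omega)
    have hrne : r ≠ 0 := by omega
    simp only [alphaC, hrne, if_false]
    rw [abs_mul, abs_mul, abs_pow, abs_c]
    set x : ℝ := (k:ℝ) + 2*r with hx
    have hx0 : (0:ℝ) ≤ x := by positivity
    have h1 : |(k:ℝ) / (r * N)| ≤ (k:ℝ) := by
      rw [abs_of_nonneg (by positivity)]
      have hrN : (1:ℝ) ≤ (r:ℝ)*N := by nlinarith
      rw [div_le_iff₀ (by nlinarith)]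
      nlinarith [mul_le_mul_of_nonneg_left hrN (Nat.cast_nonneg (α := ℝ) k)]
    have hdivle : ((k:ℝ) + r)/N ≤ (k:ℝ) + r := div_le_self (by positivity) hN'
    have hdiv0 : (0:ℝ) ≤ ((k:ℝ) + r)/N := by positivity
    have hprod : |∏ j ∈ range (r-1), (((k:ℝ) + r)/N - 1 - (j:ℝ))| ≤ x ^ (r-1) := by
      rw [Finset.abs_prod]
      calc ∏ j ∈ range (r-1), |((k:ℝ) + r)/N - 1 - (j:ℝ)|
          ≤ ∏ _j ∈ range (r-1), x := by
            refine Finset.prod_le_prod (fun _ _ => abs_nonneg _) (fun j hj => ?_)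
            have hjr : (j:ℝ) + 1 ≤ (r:ℝ) := by
              have := Finset.mem_range.mp hj
              exact_mod_cast Nat.succ_le_of_lt (by omega)
            rw [abs_le]
            constructor <;> nlinarith [Nat.cast_nonneg (α := ℝ) k]
        _ = x ^ (r-1) := by rw [Finset.prod_const, Finset.card_range]
    have h2 : |gbc (((k:ℝ) + r) / N - 1) (r - 1)| ≤ x ^ (r-1) / (((r-1).factorial : ℕ):ℝ) := by
      rw [gbc, abs_div, Nat.abs_cast]
      refine (div_le_div_iff_of_pos_right (by positivity)).mpr ?_
      convert hprod using 2
    have h3 : x ^ (r-1) / (((r-1).factorial : ℕ):ℝ) ≤ Real.exp x := by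
      refine le_trans ?_ (Real.sum_le_exp_of_nonneg hx0 r)
      refine Finset.single_le_sum (f := fun i => x^i / (i.factorial : ℝ))
        (fun i _ => by positivity) ?_
      refine Finset.mem_range.mpr (by omega)
    have hexp : Real.exp x = Real.exp k * (Real.exp 2)^r := by
      rw [hx, Real.exp_add, show (2:ℝ)*(r:ℝ) = (r:ℕ)*(2:ℝ) by ring, Real.exp_nat_mul]
    calc |(k:ℝ) / (r * N)| * |gbc (((k:ℝ) + r) / N - 1) (r - 1)| * (((2:ℝ)^b)⁻¹)^r
        ≤ (k:ℝ) * (x ^ (r-1) / (((r-1).factorial : ℕ):ℝ)) * (((2:ℝ)^b)⁻¹)^r := by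
          gcongr
      _ ≤ (k:ℝ) * Real.exp x * (((2:ℝ)^b)⁻¹)^r := by
          gcongr
      _ = (k:ℝ) * Real.exp k * ((Real.exp 2)^r * (((2:ℝ)^b)⁻¹)^r) := by rw [hexp]; ring
      _ = (k:ℝ) * Real.exp k * (Real.exp 2 * ((2:ℝ)^b)⁻¹)^r := by rw [mul_pow]
      _ ≤ ((k:ℝ)+1) * Real.exp k * (Real.exp 2 * ((2:ℝ)^b)⁻¹)^r := by
          gcongr ?_ * _ * _
          · linarith

set_option maxHeartbeats 1000000 in
lemma alpha_norm_summable (b N : ℕ) (hb : 4 ≤ b) (hN : 3 ≤ N) (k : ℕ) (z : ℂ)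
    (hz : ‖z‖ < 2) :
    Summable (fun r : ℕ => ‖(alphaC b N r k : ℂ) * z ^ (k + r)‖) := by
  have he2' : Real.exp 2 = Real.exp 1 * Real.exp 1 := by
    rw [← Real.exp_add]; norm_num
  have he2 : Real.exp 2 < 8 := by
    nlinarith [Real.exp_one_lt_d9, Real.exp_pos 1]
  have h16 : (16:ℝ) ≤ (2:ℝ)^b := by
    calc (16:ℝ) = 2^4 := by norm_num
      _ ≤ 2^b := by
        apply pow_le_pow_right₀ (by norm_num) hb
  have hb0 : (0:ℝ) < ((2:ℝ)^b)⁻¹ := by positivity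
  have hinv : ((2:ℝ)^b)⁻¹ ≤ 16⁻¹ := by
    apply inv_anti₀ (by norm_num) h16
  set ρ : ℝ := Real.exp 2 * ((2:ℝ)^b)⁻¹ * ‖z‖ with hρ
  have hz0 : (0:ℝ) ≤ ‖z‖ := norm_nonneg z
  have hρ0 : (0:ℝ) ≤ ρ := by positivity
  have hρ1 : ρ < 1 := by
    have h1 : Real.exp 2 * ((2:ℝ)^b)⁻¹ < 1/2 := by
      nlinarith [mul_le_mul_of_nonneg_left hinv (Real.exp_pos 2).le]
    have h2 := mul_lt_mul'' h1 hz (by positivity) hz0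
    rw [hρ]
    nlinarith
  refine Summable.of_nonneg_of_le
    (f := fun r => (((k:ℝ)+1) * Real.exp k * ‖z‖ ^ k) * ρ^r)
    (fun r => norm_nonneg _) ?_ ?_
  · intro r
    have hbd := alphaC_bound b N (by omega) k r
    rw [norm_mul, norm_pow, Complex.norm_real, Real.norm_eq_abs]
    calc |alphaC b N r k| * ‖z‖ ^ (k+r)
        ≤ (((k:ℝ)+1) * Real.exp k * (Real.exp 2 * ((2:ℝ)^b)⁻¹)^r)
            * ‖z‖ ^ (k+r) := by
          exact mul_le_mul_of_nonneg_right hbd (by positivity)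
      _ = (((k:ℝ)+1) * Real.exp k * ‖z‖ ^ k) * ρ^r := by
          rw [pow_add, hρ, mul_pow]
          ring
  · exact (summable_geometric_of_lt_one hρ0 hρ1).mul_left _

/-- for `k ≥ 0` and `|z| < 2` the series `α(z) = ∑ α_{r,1} z^(r+1)`
converges, and `α(z)^k = ∑ α_{r,k} z^(k+r)`, the latter series also converging. -/
theorem alpha_power_series (b N : ℕ) (hb : 4 ≤ b) (hN : 3 ≤ N) (k : ℕ)
    (z : ℂ) (hz : ‖z‖ < 2) :
    Summable (fun r : ℕ => (alphaC b N r 1 : ℂ) * z ^ (r + 1)) ∧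
    HasSum (fun r : ℕ => (alphaC b N r k : ℂ) * z ^ (k + r))
      ((∑' r : ℕ, (alphaC b N r 1 : ℂ) * z ^ (r + 1)) ^ k) := by
  have hsum1 : Summable (fun r : ℕ => ‖(alphaC b N r 1 : ℂ) * z ^ (1 + r)‖) :=
    alpha_norm_summable b N hb hN 1 z hz
  set A : ℂ := ∑' r : ℕ, (alphaC b N r 1 : ℂ) * z ^ (r + 1) with hA
  have hfun1 : (fun r : ℕ => (alphaC b N r 1 : ℂ) * z ^ (r + 1))
      = fun r : ℕ => (alphaC b N r 1 : ℂ) * z ^ (1 + r) := by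
    funext r; rw [add_comm]
  have hs1 : Summable (fun r : ℕ => (alphaC b N r 1 : ℂ) * z ^ (r + 1)) := by
    rw [hfun1]; exact hsum1.of_norm
  have htsum_1 : ∑' r : ℕ, (alphaC b N r 1 : ℂ) * z ^ (1 + r) = A := by
    rw [hA]
    exact tsum_congr fun r => by rw [add_comm 1 r]
  have hHS : ∀ k : ℕ, HasSum (fun r : ℕ => (alphaC b N r k : ℂ) * z ^ (k + r)) (A ^ k) := by
    intro k
    induction k with
    | zero =>
      have h0 : (fun r : ℕ => (alphaC b N r 0 : ℂ) * z ^ (0 + r))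
          = fun r : ℕ => if r = 0 then (1:ℂ) else 0 := by
        funext r
        cases r with
        | zero => simp [alphaC]
        | succ m => simp [alphaC]
      rw [h0, pow_zero]
      exact hasSum_ite_eq 0 1
    | succ k ih =>
      have hk : Summable (fun r : ℕ => ‖(alphaC b N r k : ℂ) * z ^ (k + r)‖) :=
        alpha_norm_summable b N hb hN k z hz
      have hcauchy := tsum_mul_tsum_eq_tsum_sum_antidiagonal_of_summable_norm hk hsum1
      have hsummable : Summable (fun n : ℕ => ∑ kl ∈ Finset.HasAntidiagonal.antidiagonal n,
          ((alphaC b N kl.1 k : ℂ) * z ^ (k + kl.1)) * ((alphaC b N kl.2 1 : ℂ) * z ^ (1 + kl.2))) :=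
        (summable_norm_sum_mul_antidiagonal_of_summable_norm hk hsum1).of_norm
      have heq : ∀ n : ℕ, ∑ kl ∈ Finset.HasAntidiagonal.antidiagonal n,
          ((alphaC b N kl.1 k : ℂ) * z ^ (k + kl.1)) * ((alphaC b N kl.2 1 : ℂ) * z ^ (1 + kl.2))
          = (alphaC b N n (k+1) : ℂ) * z ^ ((k+1) + n) := by
        intro n
        rw [Finset.Nat.sum_antidiagonal_eq_sum_range_succ_mk]
        have hterm : ∀ i ∈ range (n+1),
            ((alphaC b N i k : ℂ) * z ^ (k + i)) * ((alphaC b N (n-i) 1 : ℂ) * z ^ (1 + (n-i)))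
            = ((alphaC b N i k : ℂ) * (alphaC b N (n-i) 1 : ℂ)) * z ^ ((k+1) + n) := by
          intro i hi
          have hi' : i ≤ n := Nat.lt_succ_iff.mp (Finset.mem_range.mp hi)
          have hexp : (k + i) + (1 + (n - i)) = (k+1) + n := by omega
          calc ((alphaC b N i k : ℂ) * z ^ (k + i)) * ((alphaC b N (n-i) 1 : ℂ) * z ^ (1 + (n-i)))
              = ((alphaC b N i k : ℂ) * (alphaC b N (n-i) 1 : ℂ)) * z ^ ((k + i) + (1 + (n-i))) := by
                ring
            _ = ((alphaC b N i k : ℂ) * (alphaC b N (n-i) 1 : ℂ)) * z ^ ((k+1) + n) := by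
                rw [hexp]
        rw [Finset.sum_congr rfl hterm, ← Finset.sum_mul]
        congr 1
        exact_mod_cast alphaC_conv b N k n
      have htsum_k : ∑' r : ℕ, (alphaC b N r k : ℂ) * z ^ (k + r) = A ^ k := ih.tsum_eq
      have h2 : ∑' n : ℕ, ∑ kl ∈ Finset.HasAntidiagonal.antidiagonal n,
          ((alphaC b N kl.1 k : ℂ) * z ^ (k + kl.1)) * ((alphaC b N kl.2 1 : ℂ) * z ^ (1 + kl.2))
          = A ^ k * A := by
        rw [← hcauchy, htsum_k, htsum_1]
      have h1 := hsummable.hasSum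
      rw [funext heq] at h1 h2
      rw [h2] at h1
      rw [pow_succ]
      exact h1
  exact ⟨hs1, hHS k⟩
end

section
/- Let F be a real polynomial of degree less than N and r ≥ 0 an integer, and let α*_r F denote the remainder on dividing ∑_{k=0}^{N−1} α_{r,k}·F_k·X^{k+r} by X^N − 1, where F_k is the coefficient of X^k in F. Then every coefficient of α*_r F has absolute value at most 2^{−r(b−2)} · max_{0≤k<N} |F_k|. -/
open Polynomial

/-- `α*_r F`: the remainder of `∑_{k<N} α_{r,k} F_k X^(k+r)` modulo `X^N - 1`. -/
noncomputable def astar (b N r : ℕ) (F : Polynomial ℝ) : Polynomial ℝ :=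
  (∑ k ∈ Finset.range N, C (alphaC b N r k * F.coeff k) * X ^ (k + r)) %ₘ (X ^ N - 1)

/-! ### Auxiliary lemmas -/

lemma prod_abs_le_factorial (m : ℕ) (y : ℝ) (h1 : -1 ≤ y) (h2 : y ≤ m) :
    ∏ j ∈ Finset.range m, |y - j| ≤ m.factorial := by
  set s : ℕ := ⌈y⌉₊ with hs
  have hsm : s ≤ m := Nat.ceil_le.mpr h2
  have hys : y ≤ s := Nat.le_ceil y
  have hsy : (s : ℝ) - 1 ≤ y := by
    rcases Nat.eq_zero_or_pos s with h | h
    · rw [h]; simpa using h1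
    · have hy0 : 0 < y := Nat.ceil_pos.mp h
      have := Nat.ceil_lt_add_one hy0.le
      push_cast at this ⊢
      linarith
  have split : (∏ j ∈ Finset.range m, |y - j|) =
      (∏ j ∈ Finset.range s, |y - j|) * ∏ j ∈ Finset.Ico s m, |y - j| := by
    simp only [Finset.range_eq_Ico]
    exact (Finset.prod_Ico_consecutive _ (Nat.zero_le s) hsm).symm
  have b1 : (∏ j ∈ Finset.range s, |y - j|) ≤ s.factorial := by
    calc (∏ j ∈ Finset.range s, |y - j|) ≤ ∏ j ∈ Finset.range s, ((s : ℝ) - j) := by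
          apply Finset.prod_le_prod (fun j _ => abs_nonneg _)
          intro j hj
          rw [Finset.mem_range] at hj
          have hj' : (j : ℝ) ≤ (s : ℝ) - 1 := by
            have : (j : ℝ) + 1 ≤ s := by exact_mod_cast hj
            linarith
          rw [abs_le]
          constructor <;> linarith
      _ = ∏ j ∈ Finset.range s, ((j : ℝ) + 1) := by
          rw [← Finset.prod_range_reflect (fun j => (j : ℝ) + 1) s]
          apply Finset.prod_congr rfl
          intro j hj
          rw [Finset.mem_range] at hj
          have : (↑(s - 1 - j) : ℝ) = s - 1 - j := by
            push_cast [Nat.cast_sub (by omega : j ≤ s - 1), Nat.cast_sub (by omega : 1 ≤ s)]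
            ring
          rw [this]; ring
      _ = s.factorial := by
          rw [← Finset.prod_range_add_one_eq_factorial]
          push_cast; rfl
  have b2 : (∏ j ∈ Finset.Ico s m, |y - j|) ≤ (m - s).factorial := by
    calc (∏ j ∈ Finset.Ico s m, |y - j|) ≤ ∏ j ∈ Finset.Ico s m, ((j : ℝ) + 1 - s) := by
          apply Finset.prod_le_prod (fun j _ => abs_nonneg _)
          intro j hj
          rw [Finset.mem_Ico] at hj
          have : (s : ℝ) ≤ j := by exact_mod_cast hj.1
          rw [abs_le]
          constructor <;> linarith
      _ = ∏ i ∈ Finset.range (m - s), ((i : ℝ) + 1) := by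
          rw [Finset.prod_Ico_eq_prod_range]
          apply Finset.prod_congr rfl
          intro i _
          push_cast; ring
      _ = (m - s).factorial := by
          rw [← Finset.prod_range_add_one_eq_factorial]
          push_cast; rfl
  have hfac : (s.factorial * (m - s).factorial : ℝ) ≤ m.factorial := by
    exact_mod_cast Nat.le_of_dvd m.factorial_pos
      (Nat.factorial_mul_factorial_dvd_factorial hsm)
  calc (∏ j ∈ Finset.range m, |y - j|) =
      (∏ j ∈ Finset.range s, |y - j|) * ∏ j ∈ Finset.Ico s m, |y - j| := split
    _ ≤ s.factorial * (m - s).factorial := by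
        apply mul_le_mul b1 b2 (Finset.prod_nonneg fun j _ => abs_nonneg _)
          (Nat.cast_nonneg _)
    _ ≤ m.factorial := hfac

lemma abs_gbc_le_one (m : ℕ) (y : ℝ) (h1 : -1 ≤ y) (h2 : y ≤ m) : |gbc y m| ≤ 1 := by
  rw [gbc, abs_div, Finset.abs_prod, abs_of_nonneg (by positivity : (0:ℝ) ≤ (m.factorial : ℝ))]
  rw [div_le_one (by positivity)]
  exact prod_abs_le_factorial m y h1 h2

lemma abs_alphaC_le (b N r k : ℕ) (hb : 4 ≤ b) (hN : 3 ≤ N) (hk : k < N) :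
    |alphaC b N r k| ≤ (2:ℝ) ^ (-((r : ℤ) * ((b : ℤ) - 2))) := by
  rcases Nat.eq_zero_or_pos r with hr | hr
  · subst hr; simp [alphaC]
  · rw [alphaC, if_neg hr.ne']
    have hN0 : (0:ℝ) < N := by positivity
    have hr0 : (1:ℝ) ≤ r := by exact_mod_cast hr
    have hkN : (k:ℝ) ≤ (N:ℝ) - 1 := by
      have : (k:ℝ) + 1 ≤ N := by exact_mod_cast hk
      linarith
    have h1 : |(k : ℝ) / (r * N)| ≤ 1 := by
      rw [abs_of_nonneg (by positivity), div_le_one (by positivity)]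
      nlinarith
    have h2 : |gbc (((k : ℝ) + r) / N - 1) (r - 1)| ≤ 1 := by
      apply abs_gbc_le_one
      · have : (0:ℝ) ≤ ((k:ℝ) + r) / N := by positivity
        linarith
      · have hcast : ((r - 1 : ℕ) : ℝ) = (r:ℝ) - 1 := by
          push_cast [Nat.cast_sub hr]; ring
        rw [hcast, sub_le_sub_iff_right, div_le_iff₀ hN0]
        nlinarith [hN0]
    have h3 : |(-(2:ℝ) ^ (-(b:ℤ))) ^ r| = (2:ℝ) ^ (-((b:ℤ) * r)) := by
      rw [abs_pow, abs_neg, abs_of_pos (by positivity), ← zpow_natCast ((2:ℝ) ^ (-(b:ℤ))) r,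
        ← zpow_mul, neg_mul]
    calc |(k : ℝ) / (r * N) * gbc (((k : ℝ) + r) / N - 1) (r - 1) * (-(2:ℝ) ^ (-(b:ℤ))) ^ r|
        = |(k : ℝ) / (r * N)| * |gbc (((k : ℝ) + r) / N - 1) (r - 1)| *
            |(-(2:ℝ) ^ (-(b:ℤ))) ^ r| := by rw [abs_mul, abs_mul]
      _ ≤ 1 * 1 * (2:ℝ) ^ (-((b:ℤ) * r)) := by
          rw [h3]
          apply mul_le_mul (mul_le_mul h1 h2 (abs_nonneg _) (by norm_num)) le_rfl
            (by positivity) (by norm_num)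
      _ = (2:ℝ) ^ (-((b:ℤ) * r)) := by ring
      _ ≤ (2:ℝ) ^ (-((r : ℤ) * ((b : ℤ) - 2))) := by
          apply zpow_le_zpow_right₀ one_le_two
          have hb' : (2:ℤ) ≤ b := by exact_mod_cast le_trans (by norm_num) hb
          have hr' : (0:ℤ) ≤ r := by positivity
          nlinarith

lemma monic_xn_sub_one (N : ℕ) (hN : 0 < N) : (X ^ N - 1 : ℝ[X]).Monic := by
  simpa using monic_X_pow_sub_C (1:ℝ) hN.ne'

lemma deg_xn_sub_one (N : ℕ) (hN : 0 < N) : (X ^ N - 1 : ℝ[X]).degree = N := by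
  simpa using degree_X_pow_sub_C hN (1:ℝ)

lemma xpow_mod (N m : ℕ) (hN : 0 < N) :
    (X ^ m : ℝ[X]) %ₘ (X ^ N - 1) = X ^ (m % N) := by
  have hmonic := monic_xn_sub_one N hN
  have hdvd : (X ^ N - 1 : ℝ[X]) ∣ X ^ m - X ^ (m % N) := by
    have heq : (X ^ m - X ^ (m % N) : ℝ[X]) = ((X ^ N) ^ (m / N) - 1) * X ^ (m % N) := by
      rw [sub_mul, one_mul, ← pow_mul, ← pow_add, Nat.div_add_mod]
    rw [heq]
    exact Dvd.dvd.mul_right (by simpa using sub_dvd_pow_sub_pow (X ^ N : ℝ[X]) 1 (m / N)) _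
  have h0 : (X ^ m - X ^ (m % N) : ℝ[X]) %ₘ (X ^ N - 1) = 0 :=
    (modByMonic_eq_zero_iff_dvd hmonic).mpr hdvd
  have hself : (X ^ (m % N) : ℝ[X]) %ₘ (X ^ N - 1) = X ^ (m % N) := by
    rw [modByMonic_eq_self_iff hmonic, deg_xn_sub_one N hN, degree_X_pow]
    exact_mod_cast Nat.mod_lt m hN
  calc (X ^ m : ℝ[X]) %ₘ (X ^ N - 1)
      = ((X ^ m - X ^ (m % N)) + X ^ (m % N) : ℝ[X]) %ₘ (X ^ N - 1) := by ring_nf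
    _ = X ^ (m % N) := by rw [add_modByMonic, h0, hself, zero_add]

lemma astar_coeff (b N r : ℕ) (hN : 0 < N) (F : ℝ[X]) (i : ℕ) :
    (astar b N r F).coeff i = ∑ k ∈ Finset.range N,
      (if (k + r) % N = i then alphaC b N r k * F.coeff k else 0) := by
  have key : astar b N r F =
      ∑ k ∈ Finset.range N, C (alphaC b N r k * F.coeff k) * X ^ ((k + r) % N) := by
    rw [astar]
    have hsum : (∑ k ∈ Finset.range N, C (alphaC b N r k * F.coeff k) * X ^ (k + r)) %ₘ
        (X ^ N - 1) = ∑ k ∈ Finset.range N,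
          (C (alphaC b N r k * F.coeff k) * X ^ (k + r)) %ₘ (X ^ N - 1) := by
      have := map_sum (modByMonicHom (X ^ N - 1 : ℝ[X]))
        (fun k => C (alphaC b N r k * F.coeff k) * X ^ (k + r)) (Finset.range N)
      simpa only [modByMonicHom_apply] using this
    rw [hsum]
    apply Finset.sum_congr rfl
    intro k _
    rw [← smul_eq_C_mul, smul_modByMonic, xpow_mod N (k + r) hN, smul_eq_C_mul]
  rw [key, finset_sum_coeff]
  apply Finset.sum_congr rfl
  intro k _
  rw [coeff_C_mul, coeff_X_pow, mul_ite, mul_one, mul_zero]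
  simp only [eq_comm]

/-- every coefficient of `α*_r F` is bounded by
`2^(-r(b-2)) · max_{k<N} |F_k|`. -/
theorem astar_r_norm_bound (b N : ℕ) (hb : 4 ≤ b) (hN : 3 ≤ N)
    (F : Polynomial ℝ) (hF : F.natDegree < N) (r : ℕ) :
    ∀ i : ℕ, |(astar b N r F).coeff i| ≤
      (2:ℝ) ^ (-((r : ℤ) * ((b : ℤ) - 2))) *
        (Finset.range N).sup' (Finset.nonempty_range_iff.mpr (by omega))
          (fun k => |F.coeff k|) := by
  intro i
  have hN0 : 0 < N := by omega
  have h0N : (0 : ℕ) ∈ Finset.range N := Finset.mem_range.mpr hN0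
  have hM0 : 0 ≤ (Finset.range N).sup' (Finset.nonempty_range_iff.mpr (by omega))
      (fun k => |F.coeff k|) :=
    le_trans (abs_nonneg (F.coeff 0)) (Finset.le_sup' (fun k => |F.coeff k|) h0N)
  have hpow : (0:ℝ) < (2:ℝ) ^ (-((r : ℤ) * ((b : ℤ) - 2))) := by positivity
  rw [astar_coeff b N r hN0 F i]
  by_cases hi : i < N
  · set k0 := (i + (N - r % N)) % N with hk0def
    have hrN : r % N < N := Nat.mod_lt _ hN0
    have hk0N : k0 < N := Nat.mod_lt _ hN0
    have hk0 : (k0 + r) % N = i := by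
      rw [← Nat.add_mod_mod, hk0def, Nat.mod_add_mod]
      have heq : i + (N - r % N) + r % N = i + N := by omega
      rw [heq, Nat.add_mod_right, Nat.mod_eq_of_lt hi]
    have huniq : ∀ k ∈ Finset.range N, k ≠ k0 →
        (if (k + r) % N = i then alphaC b N r k * F.coeff k else 0) = 0 := by
      intro k hk hne
      rw [if_neg]
      intro h
      apply hne
      have h2 : (k + r) % N = (k0 + r) % N := by rw [h, hk0]
      have h3 : k ≡ k0 [MOD N] := Nat.ModEq.add_right_cancel' r h2
      have h4 : k % N = k0 % N := h3
      rwa [Nat.mod_eq_of_lt (Finset.mem_range.mp hk), Nat.mod_eq_of_lt hk0N] at h4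
    rw [Finset.sum_eq_single_of_mem k0 (Finset.mem_range.mpr hk0N) huniq, if_pos hk0]
    calc |alphaC b N r k0 * F.coeff k0| = |alphaC b N r k0| * |F.coeff k0| := abs_mul _ _
      _ ≤ (2:ℝ) ^ (-((r : ℤ) * ((b : ℤ) - 2))) *
          (Finset.range N).sup' (Finset.nonempty_range_iff.mpr (by omega))
            (fun k => |F.coeff k|) := by
          apply mul_le_mul (abs_alphaC_le b N r k0 hb hN hk0N)
            (Finset.le_sup' (fun k => |F.coeff k|) (Finset.mem_range.mpr hk0N))
            (abs_nonneg _) hpow.le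
  · have hzero : (∑ k ∈ Finset.range N,
        (if (k + r) % N = i then alphaC b N r k * F.coeff k else 0)) = 0 := by
      apply Finset.sum_eq_zero
      intro k _
      rw [if_neg]
      have := Nat.mod_lt (k + r) hN0
      omega
    rw [hzero, abs_zero]
    exact mul_nonneg hpow.le hM0
end

section
/- Let W(X) be a polynomial with integer coefficients of degree at most 2N, regarded as a polynomial over ℝ, and let H(X) be the remainder on dividing (1 − 2^{−b} X)·W(X) by B(X) = X^{N+1} − 2^b X^N + 2^b (so deg H < N+1). Then every coefficient of 2^b·H(X) is an integer, and |W(2^b) − 2^{Nb}·H(2^b)| ≤ 2^{(N−1)b+1} · max(|W_0|, …, |W_{N−1}|), where W_i denotes the coefficient of X^i in W. -/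
open Polynomial

private lemma coeff_sum_CX (a : ℕ → ℝ) (n i : ℕ) :
    (∑ j ∈ Finset.range n, C (a j) * X ^ j).coeff i = if i < n then a i else 0 := by
  rw [finset_sum_coeff]
  simp only [coeff_C_mul, coeff_X_pow, mul_ite, mul_one, mul_zero]
  rw [Finset.sum_ite_eq (Finset.range n) i a]
  simp [Finset.mem_range]

private lemma geom_bound (x : ℝ) (hx : 2 ≤ x) :
    ∀ n : ℕ, 1 ≤ n → ∑ i ∈ Finset.range n, x ^ i ≤ 2 * x ^ (n - 1) := by
  intro n hn
  induction n with
  | zero => omega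
  | succ k ih =>
    rcases Nat.eq_or_lt_of_le hn with h1 | h1
    · have hk0 : k = 0 := by omega
      subst hk0
      norm_num
    · have hk : 1 ≤ k := by omega
      have hxk : (0:ℝ) ≤ x ^ (k - 1) := by positivity
      have h2 : x ^ (k - 1) * x = x ^ k := by
        rw [← pow_succ]; congr 1; omega
      rw [Finset.sum_range_succ]
      have := ih hk
      have hxx : 2 * x ^ (k-1) ≤ x ^ k := by
        calc 2 * x ^ (k-1) ≤ x ^ (k-1) * x := by nlinarith
        _ = x ^ k := h2
      calc ∑ i ∈ Finset.range k, x ^ i + x ^ k ≤ 2 * x ^ (k-1) + x ^ k := by linarith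
        _ ≤ x ^ k + x ^ k := by linarith
        _ = 2 * x ^ ((k+1) - 1) := by rw [Nat.add_sub_cancel]; ring
  
/-- cancellation trick for the high product.
`B(X) = X^(N+1) - 2^b X^N + 2^b`, `H` is the remainder of `(1 - 2^(-b) X) W(X)`
modulo `B`. Then all coefficients of `2^b H` are integers, and
`|W(2^b) - 2^(Nb) H(2^b)| ≤ 2^((N-1)b+1) max_{i<N} |W_i|`. -/
theorem high_product_cancellation (b N : ℕ) (hb : 4 ≤ b) (hN : 3 ≤ N)
    (W : Polynomial ℤ) (hW : W.natDegree ≤ 2 * N)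
    (H : Polynomial ℝ)
    (hH : H = ((1 - C ((2:ℝ) ^ (-(b:ℤ))) * X) * W.map (Int.castRingHom ℝ)) %ₘ
        (X ^ (N + 1) - C ((2:ℝ) ^ b) * X ^ N + C ((2:ℝ) ^ b))) :
    (∀ i : ℕ, ∃ m : ℤ, (2:ℝ) ^ b * H.coeff i = (m : ℝ)) ∧
    |((W.eval (2 ^ b) : ℤ) : ℝ) - (2:ℝ) ^ (N * b) * H.eval ((2:ℝ) ^ b)| ≤
      (2:ℝ) ^ ((N - 1) * b + 1) *
        (Finset.range N).sup' (Finset.nonempty_range_iff.mpr (by omega))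
          (fun i => |(W.coeff i : ℝ)|) := by
  set c : ℝ := (2:ℝ) ^ (-(b:ℤ)) with hcdef
  have hcb : c * 2 ^ b = 1 := by
    rw [hcdef, ← zpow_natCast (2:ℝ) b, ← zpow_add₀ (two_ne_zero)]
    simp
  set w : ℕ → ℝ := fun i => ((W.coeff i : ℤ) : ℝ) with hwdef
  set Wl : ℝ[X] := ∑ j ∈ Finset.range N, C (w j) * X ^ j with hWl
  set Wh : ℝ[X] := ∑ j ∈ Finset.range (N+1), C (w (N + j)) * X ^ j with hWh
  set Bp : ℝ[X] := X ^ (N + 1) - C ((2:ℝ) ^ b) * X ^ N + C ((2:ℝ) ^ b) with hBp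
  -- decomposition of W
  have hmap : W.map (Int.castRingHom ℝ) = Wl + Wh * X ^ N := by
    ext j
    rw [coeff_map]
    simp only [coeff_add, coeff_mul_X_pow', hWl, hWh, coeff_sum_CX]
    rcases lt_or_ge j N with hj | hj
    · rw [if_pos hj, if_neg (by omega)]
      simp [hwdef]
    · rw [if_neg (by omega), if_pos hj]
      rcases le_or_gt j (2*N) with hj2 | hj2
      · rw [if_pos (by omega)]
        have : N + (j - N) = j := by omega
        rw [this]; simp [hwdef]
      · rw [if_neg (by omega)]
        have : W.coeff j = 0 := coeff_eq_zero_of_natDegree_lt (by omega)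
        simp [this]
  -- B is monic of degree N+1
  have hdegaux : degree (-(C ((2:ℝ) ^ b) * X ^ N) + C ((2:ℝ) ^ b)) < (N+1 : ℕ) := by
    apply lt_of_le_of_lt (degree_add_le _ _)
    rw [max_lt_iff]
    constructor
    · rw [degree_neg]
      apply lt_of_le_of_lt (degree_mul_le _ _)
      apply lt_of_le_of_lt (add_le_add degree_C_le (degree_pow_le_of_le N (degree_X_le)))
      simp
      exact_mod_cast Nat.lt_succ_self N
    · exact lt_of_le_of_lt degree_C_le (by exact_mod_cast Nat.cast_lt.mpr (Nat.succ_pos N))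
  have hBeq : Bp = X ^ (N+1) + (-(C ((2:ℝ) ^ b) * X ^ N) + C ((2:ℝ) ^ b)) := by
    rw [hBp]; ring
  have hmonic : Bp.Monic := by
    rw [hBeq]
    exact monic_X_pow_add hdegaux
  have hdegB : Bp.degree = (N+1 : ℕ) := by
    rw [hBeq]
    rw [degree_add_eq_left_of_degree_lt]
    · exact degree_X_pow (N+1)
    · rw [degree_X_pow]; exact hdegaux
  -- the explicit remainder G
  set G : ℝ[X] := Wl - C c * (X * Wl) + Wh with hG
  have hGcoeff : ∀ i : ℕ, G.coeff i =
      (if i < N then w i else 0) - c * (X * Wl).coeff i + (if i < N + 1 then w (N + i) else 0) := by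
    intro i
    simp only [hG, coeff_add, coeff_sub, coeff_C_mul, hWl, hWh, coeff_sum_CX]
  have hXWl : ∀ i : ℕ, (X * Wl).coeff i = if 1 ≤ i ∧ i - 1 < N then w (i-1) else 0 := by
    intro i
    match i with
    | 0 => simp [coeff_X_mul_zero]
    | (k+1) =>
      rw [coeff_X_mul, hWl, coeff_sum_CX]
      simp only [Nat.add_sub_cancel]
      congr 1
      simp only [eq_iff_iff]
      omega
  have hdegG : G.degree < Bp.degree := by
    rw [hdegB, degree_lt_iff_coeff_zero]
    intro m hm
    have hm' : N + 1 ≤ m := by exact_mod_cast hm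
    rw [hGcoeff, hXWl]
    rw [if_neg (by omega), if_neg (by omega), if_neg (by omega)]
    ring
  -- key algebraic identity
  have hkey : G + Bp * (-(C c * Wh)) =
      (1 - C c * X) * W.map (Int.castRingHom ℝ) := by
    rw [hmap, hG, hBp]
    have hc' : (C c : ℝ[X]) * C ((2:ℝ)^b) = 1 := by
      rw [← C_mul, hcb, C_1]
    linear_combination (Wh * ((X:ℝ[X])^N - 1)) * hc'
  have hHG : H = G := by
    rw [hH]
    exact (div_modByMonic_unique (-(C c * Wh)) G hmonic ⟨hkey, hdegG⟩).2
  constructor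
  · -- integrality of 2^b H
    intro i
    rw [hHG, hGcoeff, hXWl]
    refine ⟨(if i < N then 2^b * W.coeff i else 0) - (if 1 ≤ i ∧ i - 1 < N then W.coeff (i-1) else 0)
      + (if i < N + 1 then 2^b * W.coeff (N + i) else 0), ?_⟩
    split_ifs <;> (try simp only [hwdef]) <;> (try push_cast) <;>
      first
        | linear_combination (-((W.coeff (i-1) : ℤ) : ℝ)) * hcb
        | ring
  · -- the evaluation bound
    have hWleval : Wl.eval ((2:ℝ)^b) = ∑ j ∈ Finset.range N, w j * ((2:ℝ)^b) ^ j := by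
      rw [hWl, eval_finset_sum]
      simp
    have hHeval : H.eval ((2:ℝ)^b) = (1 - c * (2:ℝ)^b) * Wl.eval ((2:ℝ)^b) + Wh.eval ((2:ℝ)^b) := by
      rw [hHG, hG]
      simp only [eval_add, eval_sub, eval_mul, eval_C, eval_X]
      ring
    have hWeval : ((W.eval (2 ^ b) : ℤ) : ℝ) = Wl.eval ((2:ℝ)^b) + Wh.eval ((2:ℝ)^b) * ((2:ℝ)^b) ^ N := by
      have key := Polynomial.eval_intCast_map (Int.castRingHom ℝ) W ((2:ℤ)^b)
      rw [hmap] at key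
      simp only [eval_add, eval_mul, eval_pow, eval_X, Int.coe_castRingHom] at key
      push_cast at key
      exact_mod_cast key.symm
    have htN : (2:ℝ) ^ (N * b) = ((2:ℝ)^b) ^ N := by
      rw [← pow_mul, mul_comm]
    have hdiff : ((W.eval (2 ^ b) : ℤ) : ℝ) - (2:ℝ) ^ (N * b) * H.eval ((2:ℝ)^b) = Wl.eval ((2:ℝ)^b) := by
      rw [hWeval, htN, hHeval, hcb]
      ring
    rw [hdiff, hWleval]
    set M : ℝ := (Finset.range N).sup' (Finset.nonempty_range_iff.mpr (by omega))
          (fun i => |(W.coeff i : ℝ)|) with hM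
    have hMle : ∀ j ∈ Finset.range N, |w j| ≤ M := by
      intro j hj
      exact Finset.le_sup' (fun i => |((W.coeff i : ℤ) : ℝ)|) hj
    have hM0 : 0 ≤ M := le_trans (abs_nonneg _) (hMle 0 (Finset.mem_range.mpr (by omega)))
    have ht2 : (2:ℝ) ≤ (2:ℝ)^b := by
      calc (2:ℝ) = 2^1 := (pow_one 2).symm
      _ ≤ 2^b := by
        apply pow_le_pow_right₀ (by norm_num) (by omega)
    have htpos : ∀ j : ℕ, (0:ℝ) ≤ ((2:ℝ)^b) ^ j := by intro j; positivity
    calc |∑ j ∈ Finset.range N, w j * ((2:ℝ)^b) ^ j|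
        ≤ ∑ j ∈ Finset.range N, |w j * ((2:ℝ)^b) ^ j| := Finset.abs_sum_le_sum_abs _ _
      _ = ∑ j ∈ Finset.range N, |w j| * ((2:ℝ)^b) ^ j := by
          apply Finset.sum_congr rfl
          intro j _
          rw [abs_mul, abs_of_nonneg (htpos j)]
      _ ≤ ∑ j ∈ Finset.range N, M * ((2:ℝ)^b) ^ j := by
          apply Finset.sum_le_sum
          intro j hj
          exact mul_le_mul_of_nonneg_right (hMle j hj) (htpos j)
      _ = M * ∑ j ∈ Finset.range N, ((2:ℝ)^b) ^ j := by rw [Finset.mul_sum]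
      _ ≤ M * (2 * ((2:ℝ)^b) ^ (N - 1)) := by
          apply mul_le_mul_of_nonneg_left (geom_bound ((2:ℝ)^b) ht2 N (by omega)) hM0
      _ = (2:ℝ) ^ ((N - 1) * b + 1) * M := by
          rw [← pow_mul, pow_succ, mul_comm (N-1) b]
          ring
end

section
/- The polynomial B(X) = X^{N+1} − 2^b X^N + 2^b has a unique real root ρ in the open interval (2^b·(1 − 2^{−Nb+1}), 2^b), and this root satisfies 0.998 < ρ^N / 2^{Nb} < 1. -/
lemma aux1000 (b N : ℕ) (hb : 4 ≤ b) (hN : 3 ≤ N) : 1000 * N < 2 ^ (N * b) := by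
  have h1 : 500 * N < 2 ^ (4 * N - 1) := by
    induction N with
    | zero => omega
    | succ n ih =>
      rcases Nat.lt_or_ge n 3 with h | h
      · have hn : n = 2 := by omega
        subst hn
        norm_num
      · have h2 := ih h
        have h3 : 4 * (n + 1) - 1 = (4 * n - 1) + 4 := by omega
        rw [h3, pow_add]
        nlinarith [h2]
  have h2 : 2 ^ (4 * N) ≤ 2 ^ (N * b) := Nat.pow_le_pow_right (by norm_num) (by nlinarith)
  have h3 : 2 ^ (4 * N) = 2 * 2 ^ (4 * N - 1) := by
    rw [← pow_succ']
    congr 1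
    omega
  linarith

set_option maxHeartbeats 1000000 in
/-- `B(X) = X^(N+1) - 2^b X^N + 2^b` has a unique real root `ρ` in the
open interval `(2^b (1 - 2^(-Nb+1)), 2^b)`, and this root satisfies
`0.998 < ρ^N / 2^(Nb) < 1`. -/
theorem B_unique_real_root (b N : ℕ) (hb : 4 ≤ b) (hN : 3 ≤ N) :
    ∃ ρ : ℝ,
      (ρ ∈ Set.Ioo ((2:ℝ) ^ b * (1 - (2:ℝ) ^ (1 - (N * b : ℤ)))) ((2:ℝ) ^ b) ∧
        ρ ^ (N + 1) - 2 ^ b * ρ ^ N + 2 ^ b = 0) ∧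
      (∀ ρ' : ℝ,
        ρ' ∈ Set.Ioo ((2:ℝ) ^ b * (1 - (2:ℝ) ^ (1 - (N * b : ℤ)))) ((2:ℝ) ^ b) →
        ρ' ^ (N + 1) - 2 ^ b * ρ' ^ N + 2 ^ b = 0 → ρ' = ρ) ∧
      0.998 < ρ ^ N / 2 ^ (N * b) ∧ ρ ^ N / 2 ^ (N * b) < 1 := by
  have hN0 : (3:ℝ) ≤ (N:ℝ) := by exact_mod_cast hN
  set c : ℝ := (2:ℝ) ^ b with hc
  set ε : ℝ := (2:ℝ) ^ (1 - (N * b : ℤ)) with hεdef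
  have hcpos : 0 < c := by positivity
  have hM : (2:ℝ) ^ (N * b) = c ^ N := by rw [hc, ← pow_mul, mul_comm]
  have hMpos : (0:ℝ) < 2 ^ (N * b) := by positivity
  have hεval : ε = 2 / 2 ^ (N * b) := by
    rw [hεdef, show (1 - ((N:ℤ) * (b:ℤ))) = 1 - ((N * b : ℕ) : ℤ) by push_cast; ring,
      zpow_sub₀ (two_ne_zero), zpow_one, zpow_natCast]
  have hεpos : 0 < ε := by rw [hεval]; positivity
  have hNε : (N:ℝ) * ε < 0.002 := by
    have h := aux1000 b N hb hN
    have h' : (1000 * N : ℝ) < 2 ^ (N * b) := by exact_mod_cast h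
    rw [hεval, mul_div_assoc', div_lt_iff₀ hMpos]
    push_cast at h' ⊢
    linarith
  have hε2 : ε < 0.002 := by nlinarith
  have hεcN : ε * c ^ N = 2 := by
    rw [hεval, ← hM]
    field_simp
  set L : ℝ := c * (1 - ε) with hL
  have hLpos : 0 < L := by
    apply mul_pos hcpos
    linarith
  have hLc : L < c := by nlinarith
  have hber : 1 - (N:ℝ) * ε ≤ (1 - ε) ^ N := by
    have h := one_add_mul_le_pow (a := -ε) (by linarith) N
    have e1 : (1 : ℝ) + (N:ℝ) * (-ε) = 1 - (N:ℝ) * ε := by ring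
    have e2 : (1 : ℝ) + (-ε) = 1 - ε := by ring
    rw [e1, e2] at h
    exact h
  set f : ℝ → ℝ := fun x => x ^ (N + 1) - c * x ^ N + c with hf
  have hcont : Continuous f := by fun_prop
  have hfc : f c = c := by
    simp only [hf, pow_succ]
    ring
  have hfL : f L < 0 := by
    have hLN : L ^ N = c ^ N * (1 - ε) ^ N := mul_pow c (1 - ε) N
    have h1 : ε * L ^ N = 2 * (1 - ε) ^ N := by
      rw [hLN, ← mul_assoc, hεcN]
    have h2 : (1:ℝ) < ε * L ^ N := by
      rw [h1]
      nlinarith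
    have h3 : f L = c - c * (ε * L ^ N) := by
      simp only [hf, hL, pow_succ]
      ring
    rw [h3]
    nlinarith
  -- strict monotonicity on Icc L c
  have hmono : StrictMonoOn f (Set.Icc L c) := by
    apply strictMonoOn_of_deriv_pos (convex_Icc L c) hcont.continuousOn
    intro x hx
    rw [interior_Icc] at hx
    have hxL : L < x := hx.1
    have hx0 : 0 < x := lt_trans hLpos hxL
    have hder : HasDerivAt f (((N:ℝ) + 1) * x ^ N - c * ((N:ℝ) * x ^ (N - 1))) x := by
      have h1 := hasDerivAt_pow (N + 1) x
      have h2 := (hasDerivAt_pow N x).const_mul c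
      have := (h1.sub h2).add_const c
      simpa [Nat.add_sub_cancel, hf] using this
    rw [hder.deriv]
    have hxpow : 0 < x ^ (N - 1) := pow_pos hx0 _
    have hN1ε : ((N:ℝ) + 1) * ε < 1 := by nlinarith
    have key : c * (N:ℝ) < ((N:ℝ) + 1) * x := by nlinarith
    have hxN : x ^ N = x ^ (N - 1) * x := by
      rw [← pow_succ]
      congr 1
      omega
    rw [hxN]
    nlinarith [mul_pos hxpow (sub_pos.mpr key)]
  -- existence via IVT
  have h0 : (0:ℝ) ∈ Set.Ioo (f L) (f c) := ⟨hfL, by rw [hfc]; exact hcpos⟩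
  obtain ⟨ρ, hρmem, hρ0⟩ := intermediate_value_Ioo (le_of_lt hLc) hcont.continuousOn h0
  refine ⟨ρ, ⟨hρmem, hρ0⟩, ?_, ?_, ?_⟩
  · intro ρ' hmem' h0'
    exact hmono.injOn (Set.mem_Icc_of_Ioo hmem') (Set.mem_Icc_of_Ioo hρmem)
      (h0'.trans hρ0.symm)
  · -- lower bound
    have hρL : L < ρ := hρmem.1
    have hpow : L ^ N < ρ ^ N := pow_lt_pow_left₀ hρL (le_of_lt hLpos) (by omega)
    have hLN : L ^ N = c ^ N * (1 - ε) ^ N := mul_pow c (1 - ε) N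
    have hcN : (0:ℝ) < c ^ N := pow_pos hcpos N
    rw [hM, lt_div_iff₀ hcN]
    have h998 : (0.998:ℝ) < 1 - (N:ℝ) * ε := by linarith
    have h2 : c ^ N * 0.998 < c ^ N * (1 - (N:ℝ) * ε) := by
      exact mul_lt_mul_of_pos_left h998 hcN
    have h1 : c ^ N * (1 - (N:ℝ) * ε) ≤ c ^ N * (1 - ε) ^ N :=
      mul_le_mul_of_nonneg_left hber hcN.le
    linarith
  · -- upper bound
    have hρpos : 0 < ρ := lt_trans hLpos hρmem.1
    have hpow : ρ ^ N < c ^ N := pow_lt_pow_left₀ hρmem.2 (le_of_lt hρpos) (by omega)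
    rw [hM, div_lt_one (pow_pos hcpos N)]
    exact hpow
end

section
/- Every complex root of B(X) = X^{N+1} − 2^b X^N + 2^b is simple (B has no common complex root with its derivative B'), and every complex root of B other than ρ satisfies |z| < 2, where ρ denotes the unique real root of B in the interval (2^b·(1 − 2^{−Nb+1}), 2^b). Consequently B has exactly N+1 distinct complex roots. -/
open Polynomial

/-- Auxiliary arithmetic inequality. -/
lemma key_ineq_aux (M : ℕ) (hM : 2 ≤ M) :
    ((M : ℝ) + 1) * (1 / 14 ^ (M + 1)) * (1 + 1 / 14 ^ (M + 1)) ^ M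
      < (1 - 1 / 14 ^ (M + 1)) ^ (M + 1) := by
  have hK : (0:ℝ) < 14 ^ (M + 1) := by positivity
  set c : ℝ := 1 / 14 ^ (M + 1) with hc
  have hc0 : 0 < c := by positivity
  have hc1 : c < 1 := by
    rw [hc, div_lt_one hK]
    exact one_lt_pow₀ (by norm_num) (by omega)
  -- 3*(M+1) ≤ 14^(M+1) over ℕ, hence over ℝ
  have hnat : 3 * (M + 1) ≤ 14 ^ (M + 1) := by
    have h1 : M + 1 < 2 ^ (M + 1) := Nat.lt_two_pow_self
    have h2 : 3 * 2 ^ (M + 1) ≤ 14 ^ (M + 1) := by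
      have : (14:ℕ) ^ (M + 1) = 7 ^ (M + 1) * 2 ^ (M + 1) := by
        rw [← Nat.mul_pow]
      rw [this]
      have h7 : 3 ≤ 7 ^ (M + 1) := by
        calc (3:ℕ) ≤ 7 := by norm_num
        _ ≤ 7 ^ (M + 1) := Nat.le_self_pow (by omega) 7
      exact Nat.mul_le_mul_right _ h7
    omega
  have hnatR : 3 * ((M:ℝ) + 1) ≤ 14 ^ (M + 1) := by
    have := (Nat.cast_le (α := ℝ)).2 hnat
    push_cast at this
    linarith
  have h3c : (3 * ((M:ℝ) + 1)) * c ≤ 1 := by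
    rw [hc]
    rw [mul_one_div, div_le_one hK]
    exact hnatR
  -- Bernoulli : 1 - (2M+1)*c ≤ (1-c)^(2M+1)
  have hbern : 1 - (2 * (M:ℝ) + 1) * c ≤ (1 - c) ^ (2 * M + 1) := by
    calc 1 - (2 * (M:ℝ) + 1) * c = 1 + ((2 * M + 1 : ℕ) : ℝ) * (-c) := by push_cast; ring
    _ ≤ (1 + -c) ^ (2 * M + 1) := one_add_mul_le_pow (by linarith) (2 * M + 1)
    _ = (1 - c) ^ (2 * M + 1) := by rw [show (1:ℝ) + -c = 1 - c by ring]
  have hpow_pos : 0 < (1 - c) ^ M := pow_pos (by linarith) M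
  -- core inequality times (1-c)^M
  have hcore : (((M:ℝ) + 1) * c * (1 + c) ^ M) * (1 - c) ^ M
      < ((1 - c) ^ (M + 1)) * (1 - c) ^ M := by
    have e1 : (1 + c) ^ M * (1 - c) ^ M = (1 - c ^ 2) ^ M := by
      rw [← mul_pow]; ring_nf
    have e2 : (1 - c ^ 2) ^ M ≤ 1 :=
      pow_le_one₀ (by nlinarith) (by nlinarith)
    have e3 : ((1 - c) ^ (M + 1)) * (1 - c) ^ M = (1 - c) ^ (2 * M + 1) := by
      rw [← pow_add]; congr 1; omega
    have e4 : ((M:ℝ) + 1) * c < 1 - (2 * (M:ℝ) + 1) * c := by nlinarith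
    calc (((M:ℝ) + 1) * c * (1 + c) ^ M) * (1 - c) ^ M
        = ((M:ℝ) + 1) * c * ((1 + c) ^ M * (1 - c) ^ M) := by ring
      _ = ((M:ℝ) + 1) * c * (1 - c ^ 2) ^ M := by rw [e1]
      _ ≤ ((M:ℝ) + 1) * c * 1 := by
          have : 0 ≤ ((M:ℝ) + 1) * c := by positivity
          exact mul_le_mul_of_nonneg_left e2 this
      _ = ((M:ℝ) + 1) * c := by ring
      _ < 1 - (2 * (M:ℝ) + 1) * c := e4
      _ ≤ (1 - c) ^ (2 * M + 1) := hbern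
      _ = ((1 - c) ^ (M + 1)) * (1 - c) ^ M := e3.symm
  exact lt_of_mul_lt_mul_right hcore (le_of_lt hpow_pos)

/-- The main arithmetic inequality with the scale `T`. -/
lemma key_ineq (N : ℕ) (hN : 3 ≤ N) (T : ℝ) (hT : 16 ≤ T) :
    (N : ℝ) * (T / 14 ^ N) * (T + T / 14 ^ N) ^ (N - 1) < (T - T / 14 ^ N) ^ N := by
  obtain ⟨M, rfl⟩ : ∃ M, N = M + 1 := ⟨N - 1, by omega⟩
  have hM : 2 ≤ M := by omega
  have hT0 : (0:ℝ) < T := by linarith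
  have hTpow : (0:ℝ) < T ^ (M + 1) := pow_pos hT0 _
  set c : ℝ := 1 / 14 ^ (M + 1) with hc
  have e0 : T / 14 ^ (M + 1) = T * c := by rw [hc]; ring
  have key := key_ineq_aux M hM
  rw [← hc] at key
  have e1 : ((M + 1 : ℕ) : ℝ) * (T / 14 ^ (M + 1)) * (T + T / 14 ^ (M + 1)) ^ (M + 1 - 1)
      = (((M:ℝ) + 1) * c * (1 + c) ^ M) * T ^ (M + 1) := by
    rw [e0]
    have : M + 1 - 1 = M := by omega
    rw [this]
    have : T + T * c = T * (1 + c) := by ring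
    rw [this, mul_pow]
    push_cast
    ring
  have e2 : (T - T / 14 ^ (M + 1)) ^ (M + 1)
      = ((1 - c) ^ (M + 1)) * T ^ (M + 1) := by
    rw [e0]
    have : T - T * c = T * (1 - c) := by ring
    rw [this, mul_pow]
    ring
  rw [e1, e2]
  exact mul_lt_mul_of_pos_right key hTpow

/-- Location of large roots of the equation. -/
lemma root_loc (b N : ℕ) (hb : 4 ≤ b) (hN : 3 ≤ N) (z : ℂ)
    (hz : z ^ (N + 1) - (2:ℂ) ^ b * z ^ N + (2:ℂ) ^ b = 0)
    (h2 : 2 ≤ ‖z‖) :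
    ‖z - (2:ℂ) ^ b‖ ≤ 2 ^ b / 14 ^ N ∧
      (2:ℝ) ^ b - 2 ^ b / 14 ^ N ≤ ‖z‖ ∧
      ‖z‖ ≤ 2 ^ b + 2 ^ b / 14 ^ N := by
  set T : ℝ := 2 ^ b with hT
  have hT16 : (16:ℝ) ≤ T := by
    rw [hT]
    calc (16:ℝ) = 2 ^ 4 := by norm_num
    _ ≤ 2 ^ b := pow_le_pow_right₀ (by norm_num) hb
  have hT0 : (0:ℝ) < T := by linarith
  have habsT : ‖(2:ℂ) ^ b‖ = T := by
    rw [norm_pow, Complex.norm_two, hT]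
  have heq : z ^ N * (z - (2:ℂ) ^ b) = -(2:ℂ) ^ b := by linear_combination hz
  have habs : (‖z‖) ^ N * ‖z - (2:ℂ) ^ b‖ = T := by
    have := congrArg (‖·‖) heq
    rwa [norm_mul, norm_pow, norm_neg, habsT] at this
  set r : ℝ := ‖z‖ with hr
  set d : ℝ := ‖z - (2:ℂ) ^ b‖ with hd
  have hr0 : 0 < r := by linarith
  have hrN0 : 0 < r ^ N := pow_pos hr0 N
  have hdval : d = T / r ^ N := by
    field_simp
    linarith [habs]
  -- first bound : d ≤ T / 8
  have hrN8 : (8:ℝ) ≤ r ^ N := by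
    calc (8:ℝ) = 2 ^ 3 := by norm_num
    _ ≤ 2 ^ N := pow_le_pow_right₀ (by norm_num) hN
    _ ≤ r ^ N := pow_le_pow_left₀ (by norm_num) h2 N
  have hd8 : d ≤ T / 8 := by
    rw [hdval]
    exact div_le_div_of_nonneg_left (le_of_lt hT0) (by norm_num) hrN8
  -- triangle : T ≤ r + d
  have htri : T ≤ r + d := by
    have : ‖(2:ℂ) ^ b‖ ≤ ‖z‖ + ‖(2:ℂ) ^ b - z‖ := by
      calc ‖(2:ℂ) ^ b‖ = ‖z + ((2:ℂ) ^ b - z)‖ := by ring_nf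
      _ ≤ ‖z‖ + ‖(2:ℂ) ^ b - z‖ := norm_add_le _ _
    rwa [habsT, norm_sub_rev, ← hr, ← hd] at this
  have hr14 : (14:ℝ) ≤ r := by
    have : 7 * T / 8 ≤ r := by linarith
    linarith
  have hrN14 : (14:ℝ) ^ N ≤ r ^ N := pow_le_pow_left₀ (by norm_num) hr14 N
  have hd14 : d ≤ T / 14 ^ N := by
    rw [hdval]
    exact div_le_div_of_nonneg_left (le_of_lt hT0) (by positivity) hrN14
  refine ⟨hd14, by linarith, ?_⟩
  -- r ≤ T + d
  have : r ≤ T + d := by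
    calc r = ‖(2:ℂ) ^ b + (z - (2:ℂ) ^ b)‖ := by rw [hr]; ring_nf
    _ ≤ ‖(2:ℂ) ^ b‖ + ‖z - (2:ℂ) ^ b‖ := norm_add_le _ _
    _ = T + d := by rw [habsT, hd]
  linarith

/-- Uniqueness: at most one root of modulus ≥ 2. -/
lemma uniq_big_root (b N : ℕ) (hb : 4 ≤ b) (hN : 3 ≤ N) (z₁ z₂ : ℂ)
    (h1 : z₁ ^ (N + 1) - (2:ℂ) ^ b * z₁ ^ N + (2:ℂ) ^ b = 0)
    (h2 : z₂ ^ (N + 1) - (2:ℂ) ^ b * z₂ ^ N + (2:ℂ) ^ b = 0)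
    (ha1 : 2 ≤ ‖z₁‖) (ha2 : 2 ≤ ‖z₂‖) : z₁ = z₂ := by
  by_contra hne
  set T : ℝ := 2 ^ b with hT
  have hT16 : (16:ℝ) ≤ T := by
    rw [hT]
    calc (16:ℝ) = 2 ^ 4 := by norm_num
    _ ≤ 2 ^ b := pow_le_pow_right₀ (by norm_num) hb
  obtain ⟨hd1, hlo1, hhi1⟩ := root_loc b N hb hN z₁ h1 ha1
  obtain ⟨hd2, hlo2, hhi2⟩ := root_loc b N hb hN z₂ h2 ha2
  set G : ℂ := ∑ i ∈ Finset.range N, z₁ ^ i * z₂ ^ (N - 1 - i) with hG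
  have hgeom1 : G * (z₁ - z₂) = z₁ ^ N - z₂ ^ N := geom_sum₂_mul z₁ z₂ N
  have hgeom2 : (∑ i ∈ Finset.range (N + 1), z₁ ^ i * z₂ ^ (N - i)) * (z₁ - z₂)
      = z₁ ^ (N + 1) - z₂ ^ (N + 1) := by
    have := geom_sum₂_mul z₁ z₂ (N + 1)
    simpa using this
  have hsplit : (∑ i ∈ Finset.range (N + 1), z₁ ^ i * z₂ ^ (N - i)) = z₂ * G + z₁ ^ N := by
    rw [Finset.sum_range_succ, Nat.sub_self, pow_zero, mul_one, hG, Finset.mul_sum]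
    congr 1
    apply Finset.sum_congr rfl
    intro i hi
    have hi' : i < N := Finset.mem_range.mp hi
    rw [show N - i = (N - 1 - i) + 1 from by omega]
    ring
  have hzz : z₁ - z₂ ≠ 0 := sub_ne_zero.mpr hne
  have hkey : z₁ ^ N = ((2:ℂ) ^ b - z₂) * G := by
    have hmul : (z₁ ^ N - ((2:ℂ) ^ b - z₂) * G) * (z₁ - z₂) = 0 := by
      have expand : (z₁ ^ N - ((2:ℂ) ^ b - z₂) * G) * (z₁ - z₂)
          = ((z₂ * G + z₁ ^ N) * (z₁ - z₂)) - (2:ℂ) ^ b * (G * (z₁ - z₂)) := by ring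
      rw [expand, ← hsplit, hgeom2, hgeom1]
      linear_combination h1 - h2
    rcases mul_eq_zero.mp hmul with h | h
    · exact sub_eq_zero.mp h
    · exact absurd h hzz
  -- take absolute values
  set M : ℝ := T + T / 14 ^ N with hMdef
  have hM0 : (0:ℝ) ≤ M := by
    have : (0:ℝ) ≤ T / 14 ^ N := by positivity
    rw [hMdef]; linarith
  have habsG : ‖G‖ ≤ (N:ℝ) * M ^ (N - 1) := by
    calc ‖G‖ ≤ ∑ i ∈ Finset.range N, ‖z₁ ^ i * z₂ ^ (N - 1 - i)‖ :=
          norm_sum_le _ _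
    _ ≤ ∑ _i ∈ Finset.range N, M ^ (N - 1) := by
        apply Finset.sum_le_sum
        intro i hi
        have hi' : i < N := Finset.mem_range.mp hi
        rw [norm_mul, norm_pow, norm_pow]
        calc ‖z₁‖ ^ i * ‖z₂‖ ^ (N - 1 - i)
            ≤ M ^ i * M ^ (N - 1 - i) := by
              apply mul_le_mul
              · exact pow_le_pow_left₀ (norm_nonneg _) hhi1 i
              · exact pow_le_pow_left₀ (norm_nonneg _) hhi2 _
              · positivity
              · positivity
        _ = M ^ (N - 1) := by rw [← pow_add]; congr 1; omega
    _ = (N:ℝ) * M ^ (N - 1) := by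
        rw [Finset.sum_const, Finset.card_range, nsmul_eq_mul]
  have habskey : (‖z₁‖) ^ N
      = ‖(2:ℂ) ^ b - z₂‖ * ‖G‖ := by
    have := congrArg (‖·‖) hkey
    rwa [norm_pow, norm_mul] at this
  have hd2' : ‖(2:ℂ) ^ b - z₂‖ ≤ T / 14 ^ N := by
    rwa [norm_sub_rev] at hd2
  have hup : (‖z₁‖) ^ N ≤ (T / 14 ^ N) * ((N:ℝ) * M ^ (N - 1)) := by
    rw [habskey]
    exact mul_le_mul hd2' habsG (norm_nonneg _) (by positivity)
  have h14 : (1:ℝ) ≤ 14 ^ N := by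
    calc (1:ℝ) = 1 ^ N := (one_pow N).symm
    _ ≤ 14 ^ N := pow_le_pow_left₀ (by norm_num) (by norm_num) N
  have hTd : (0:ℝ) ≤ T - T / 14 ^ N := by
    have : T / 14 ^ N ≤ T / 1 := by
      apply div_le_div_of_nonneg_left (by linarith) (by norm_num) h14
    simp at this
    linarith
  have hlow : (T - T / 14 ^ N) ^ N ≤ (‖z₁‖) ^ N :=
    pow_le_pow_left₀ hTd hlo1 N
  have hki := key_ineq N hN T hT16
  have hre : (T / 14 ^ N) * ((N:ℝ) * M ^ (N - 1)) = (N:ℝ) * (T / 14 ^ N) * M ^ (N - 1) := by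
    ring
  rw [hre] at hup
  rw [hMdef] at hup
  linarith

/-- every complex root of `B(X) = X^(N+1) - 2^b X^N + 2^b` is simple,
and every complex root other than the distinguished real root `ρ` satisfies `|z| < 2`.
Consequently `B` has exactly `N + 1` distinct complex roots. -/
theorem roots_of_B (b N : ℕ) (hb : 4 ≤ b) (hN : 3 ≤ N) (ρ : ℝ)
    (hρ : ρ ∈ Set.Ioo ((2:ℝ) ^ b * (1 - (2:ℝ) ^ (1 - (N * b : ℤ)))) ((2:ℝ) ^ b))
    (hρroot : ρ ^ (N + 1) - 2 ^ b * ρ ^ N + 2 ^ b = 0)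
    (B : Polynomial ℂ)
    (hB : B = X ^ (N + 1) - C ((2:ℂ) ^ b) * X ^ N + C ((2:ℂ) ^ b)) :
    (∀ z : ℂ, B.eval z = 0 → B.derivative.eval z ≠ 0) ∧
    (∀ z : ℂ, B.eval z = 0 → z ≠ (ρ : ℂ) → ‖z‖ < 2) ∧
    B.roots.toFinset.card = N + 1 := by
  classical
  have hT16 : (16:ℝ) ≤ 2 ^ b := by
    calc (16:ℝ) = 2 ^ 4 := by norm_num
    _ ≤ 2 ^ b := pow_le_pow_right₀ (by norm_num) hb
  have heval : ∀ z : ℂ, B.eval z = z ^ (N + 1) - (2:ℂ) ^ b * z ^ N + (2:ℂ) ^ b := by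
    intro z; rw [hB]; simp
  have hTne : ((2:ℂ) ^ b) ≠ 0 := pow_ne_zero _ two_ne_zero
  have hN1 : ((N:ℂ) + 1) ≠ 0 := by
    have e : ((N:ℂ) + 1) = ((N + 1 : ℕ) : ℂ) := by push_cast; ring
    rw [e]
    exact Nat.cast_ne_zero.mpr (by omega)
  have habsN1 : ‖(N:ℂ) + 1‖ = (N:ℝ) + 1 := by
    rw [show ((N:ℂ) + 1) = ((N + 1 : ℕ) : ℂ) by push_cast; ring, Complex.norm_natCast]
    push_cast; ring
  -- Part 1 : simple roots
  have part1 : ∀ z : ℂ, B.eval z = 0 → B.derivative.eval z ≠ 0 := by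
    intro z hz hz'
    rw [heval] at hz
    have hder : B.derivative.eval z
        = ((N:ℂ) + 1) * z ^ N - (2:ℂ) ^ b * ((N:ℂ) * z ^ (N - 1)) := by
      rw [hB, derivative_add, derivative_sub, derivative_C, derivative_C_mul,
        derivative_X_pow, derivative_X_pow]
      simp
    rw [hder] at hz'
    have hz0 : z ≠ 0 := by
      intro h
      rw [h] at hz
      rw [zero_pow (by omega : N + 1 ≠ 0), zero_pow (by omega : N ≠ 0)] at hz
      simp at hz
    have hzN1 : z ^ (N - 1) ≠ 0 := pow_ne_zero _ hz0
    have expand : z ^ N = z ^ (N - 1) * z := by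
      rw [← pow_succ]; congr 1; omega
    have hfact : (((N:ℂ) + 1) * z - (2:ℂ) ^ b * (N:ℂ)) * z ^ (N - 1) = 0 := by
      rw [expand] at hz'
      linear_combination hz'
    have hNz : ((N:ℂ) + 1) * z = (2:ℂ) ^ b * (N:ℂ) := by
      rcases mul_eq_zero.mp hfact with h | h
      · exact sub_eq_zero.mp h
      · exact absurd h hzN1
    have hzval : z = (2:ℂ) ^ b * (N:ℂ) / ((N:ℂ) + 1) := by
      field_simp
      linear_combination hNz
    have habsz : ‖z‖ = 2 ^ b * (N:ℝ) / ((N:ℝ) + 1) := by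
      rw [hzval, norm_div, norm_mul, norm_pow, Complex.norm_two, Complex.norm_natCast, habsN1]
    have hsub : z - (2:ℂ) ^ b = -((2:ℂ) ^ b / ((N:ℂ) + 1)) := by
      rw [hzval]; field_simp; ring
    have hroot2 : z ^ N * ((2:ℂ) ^ b / ((N:ℂ) + 1)) = (2:ℂ) ^ b := by
      have h0 : z ^ N * (z - (2:ℂ) ^ b) = -(2:ℂ) ^ b := by linear_combination hz
      rw [hsub] at h0
      linear_combination -h0
    have hzN : z ^ N = (N:ℂ) + 1 := by
      calc z ^ N = z ^ N * ((2:ℂ) ^ b / ((N:ℂ) + 1)) * (((N:ℂ) + 1) / (2:ℂ) ^ b) := by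
            field_simp
      _ = (2:ℂ) ^ b * (((N:ℂ) + 1) / (2:ℂ) ^ b) := by rw [hroot2]
      _ = (N:ℂ) + 1 := by field_simp
    have habspow : (‖z‖) ^ N = (N:ℝ) + 1 := by
      have := congrArg (‖·‖) hzN
      rwa [norm_pow, habsN1] at this
    have hNR : (3:ℝ) ≤ (N:ℝ) := by exact_mod_cast hN
    have h12 : (12:ℝ) ≤ ‖z‖ := by
      rw [habsz, le_div_iff₀ (by positivity)]
      nlinarith [hT16]
    have hcontr : (12:ℝ) ^ N ≤ (N:ℝ) + 1 := by
      rw [← habspow]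
      exact pow_le_pow_left₀ (by norm_num) h12 N
    have h2N : (N:ℝ) + 1 ≤ 2 ^ N := by
      have := Nat.lt_two_pow_self (n := N)
      exact_mod_cast this
    have h212 : (2:ℝ) ^ N < 12 ^ N := by
      apply pow_lt_pow_left₀ (by norm_num) (by norm_num)
      omega
    linarith
  -- ρ facts
  have hρ2 : (2:ℝ) ≤ ρ := by
    have h1 := hρ.1
    have hzp : (2:ℝ) ^ (1 - (N * b : ℤ)) ≤ 2 ^ (-(11:ℤ)) := by
      apply zpow_le_zpow_right₀ (by norm_num)
      have : (12:ℕ) ≤ N * b := Nat.mul_le_mul hN hb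
      omega
    have h2 : (2:ℝ) ^ (-(11:ℤ)) ≤ 1 / 2 := by norm_num
    have h3 : (2:ℝ) ^ (1 - (N * b : ℤ)) ≤ 1 / 2 := le_trans hzp h2
    have hhalf : (1:ℝ) / 2 ≤ 1 - (2:ℝ) ^ (1 - (N * b : ℤ)) := by linarith
    have hprod : (16:ℝ) * (1 / 2) ≤ 2 ^ b * (1 - (2:ℝ) ^ (1 - (N * b : ℤ))) :=
      mul_le_mul hT16 hhalf (by norm_num) (by linarith)
    linarith
  have hρroot' : ((ρ:ℂ)) ^ (N + 1) - (2:ℂ) ^ b * (ρ:ℂ) ^ N + (2:ℂ) ^ b = 0 := by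
    exact_mod_cast congrArg (Complex.ofReal) hρroot
  have habsρ : ‖(ρ:ℂ)‖ = ρ := by
    rw [Complex.norm_real, Real.norm_eq_abs, abs_of_nonneg (by linarith)]
  -- Part 2
  have part2 : ∀ z : ℂ, B.eval z = 0 → z ≠ (ρ : ℂ) → ‖z‖ < 2 := by
    intro z hz hne
    by_contra h
    push_neg at h
    rw [heval] at hz
    exact hne (uniq_big_root b N hb hN z (ρ:ℂ) hz hρroot' h (by rw [habsρ]; exact hρ2))
  refine ⟨part1, part2, ?_⟩
  -- Part 3 : exactly N+1 distinct roots
  have hdeg : B.natDegree = N + 1 := by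
    rw [hB]; compute_degree!
  have hB0 : B ≠ 0 := by
    intro h
    rw [h] at hdeg
    simp at hdeg
  have hcard : Multiset.card B.roots = N + 1 := by
    rw [← hdeg]
    exact splits_iff_card_roots.mp (IsAlgClosed.splits B)
  have hnodup : B.roots.Nodup := by
    rw [Multiset.nodup_iff_count_le_one]
    intro a
    by_contra hcount
    push_neg at hcount
    rw [count_roots] at hcount
    have haroot : B.IsRoot a := by
      rw [← rootMultiplicity_pos hB0]; omega
    have hd0 : B.derivative ≠ 0 := by
      intro h
      exact part1 a haroot (by rw [h]; simp)
    have hpos : 0 < rootMultiplicity a B.derivative := by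
      rw [derivative_rootMultiplicity_of_root haroot]; omega
    rw [rootMultiplicity_pos hd0] at hpos
    exact part1 a haroot hpos
  rw [Multiset.toFinset_card_of_nodup hnodup, hcard]
end
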